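/- Let p be prime, r ≥ 1, and let a₁,...,aₙ be nonnegative integers with sum a. Then the multinomial coefficient (p^r·a)! / ((p^r·a₁)! ⋯ (p^r·aₙ)!) is congruent to (p^(r-1)·a)! / ((p^(r-1)·a₁)! ⋯ (p^(r-1)·aₙ)!) modulo p^(2r). -/

import Mathlib

open Finset Nat

/-- The set of indices `i < n` with `p ∤ i+1`. -/
private def Tset (p n : ℕ) : Finset ℕ := (Finset.range n).filter (fun i => ¬ p ∣ (i + 1))

private lemma factorial_add_eq (a m : ℕ) :
    (a + m)! = a ! * ∏ i ∈ Finset.range m, (a + i + 1) := by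
  induction m with
  | zero => simp
  | succ m ih =>
    rw [Finset.prod_range_succ, ← mul_assoc, ← ih, show a + (m + 1) = (a + m) + 1 by ring,
      Nat.factorial_succ, mul_comm]

private lemma prodA (p : ℕ) (hp : 0 < p) (n d : ℕ) :
    ∏ i ∈ Finset.range (p * n), (p * d + i + 1)
      = p ^ n * (∏ k ∈ Finset.range n, (d + k + 1)) *
          ∏ i ∈ Tset p (p * n), (p * d + i + 1) := by
  rw [← Finset.prod_filter_mul_prod_filter_not (Finset.range (p * n)) (fun i => p ∣ (i + 1))]
  have hdiv : ∏ i ∈ (Finset.range (p * n)).filter (fun i => p ∣ (i + 1)), (p * d + i + 1)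
      = ∏ k ∈ Finset.range n, (p * (d + k + 1)) := by
    refine Finset.prod_bij' (fun i _ => (i + 1) / p - 1) (fun k _ => p * k + p - 1)
      ?_ ?_ ?_ ?_ ?_
    · intro i hi
      simp only [Finset.mem_filter, Finset.mem_range] at hi
      obtain ⟨hi1, m, hm⟩ := hi
      rcases m with _ | m'
      · simp at hm
      have hle : p * (m' + 1) ≤ p * n := by omega
      have hmn : m' + 1 ≤ n := Nat.le_of_mul_le_mul_left hle hp
      simp only [Finset.mem_range]
      rw [hm, Nat.mul_div_cancel_left _ hp]
      omega
    · intro k hk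
      simp only [Finset.mem_range] at hk
      have e1 : p * (k + 1) = p * k + p := by ring
      have h1 : p * (k + 1) ≤ p * n := Nat.mul_le_mul_left p (by omega)
      simp only [Finset.mem_filter, Finset.mem_range]
      exact ⟨by omega, ⟨k + 1, by omega⟩⟩
    · intro i hi
      simp only [Finset.mem_filter, Finset.mem_range] at hi
      obtain ⟨hi1, m, hm⟩ := hi
      rcases m with _ | m'
      · simp at hm
      have e1 : p * (m' + 1) = p * m' + p := by ring
      show p * ((i + 1) / p - 1) + p - 1 = i
      rw [hm, Nat.mul_div_cancel_left _ hp]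
      simp only [Nat.add_sub_cancel]
      omega
    · intro k hk
      show (p * k + p - 1 + 1) / p - 1 = k
      have e1 : p * k + p - 1 + 1 = p * (k + 1) := by
        have : p * (k + 1) = p * k + p := by ring
        omega
      rw [e1, Nat.mul_div_cancel_left _ hp]
      omega
    · intro i hi
      simp only [Finset.mem_filter, Finset.mem_range] at hi
      obtain ⟨hi1, m, hm⟩ := hi
      rcases m with _ | m'
      · simp at hm
      have e1 : p * (m' + 1) = p * m' + p := by ring
      show p * d + i + 1 = p * (d + ((i + 1) / p - 1) + 1)
      rw [hm, Nat.mul_div_cancel_left _ hp]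
      simp only [Nat.add_sub_cancel]
      have e3 : p * (d + m' + 1) = p * d + p * m' + p := by ring
      omega
  rw [hdiv, Finset.prod_mul_distrib, Finset.prod_const, Finset.card_range]
  rfl

private lemma key_identity (p : ℕ) (hp : 0 < p) (N D : ℕ) :
    Nat.choose (p * (N + D)) (p * N) * ∏ i ∈ Tset p (p * N), (i + 1)
      = Nat.choose (N + D) N * ∏ i ∈ Tset p (p * N), (p * D + i + 1) := by
  set U0 := ∏ i ∈ Tset p (p * N), (i + 1) with hU0
  set U1 := ∏ i ∈ Tset p (p * N), (p * D + i + 1) with hU1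
  set R := ∏ k ∈ Finset.range N, (D + k + 1) with hR
  -- (p*N)! = p^N * N! * U0
  have E4 : (p * N)! = p ^ N * N ! * U0 := by
    have h0 := prodA p hp N 0
    simp only [Nat.mul_zero, Nat.zero_add] at h0
    have hf : ∏ i ∈ Finset.range (p * N), (i + 1) = (p * N)! := by
      simpa using (factorial_add_eq 0 (p * N)).symm
    have hf2 : ∏ k ∈ Finset.range N, (k + 1) = N ! := by
      simpa using (factorial_add_eq 0 N).symm
    rw [hf, hf2] at h0
    exact h0
  have A1 : ∏ i ∈ Finset.range (p * N), (p * D + i + 1) = p ^ N * R * U1 := prodA p hp N D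
  have F1 : (p * (N + D))! = (p * D)! * ∏ i ∈ Finset.range (p * N), (p * D + i + 1) := by
    have := factorial_add_eq (p * D) (p * N)
    rwa [show p * D + p * N = p * (N + D) by ring] at this
  have F2 : (N + D)! = D ! * R := by
    have := factorial_add_eq D N
    rwa [show D + N = N + D by ring] at this
  have C1 : Nat.choose (p * (N + D)) (p * N) * (p * N)! * (p * D)! = (p * (N + D))! := by
    have h := Nat.choose_mul_factorial_mul_factorial
      (show p * N ≤ p * (N + D) from Nat.mul_le_mul_left p (by omega))
    rwa [show p * (N + D) - p * N = p * D by
      have : p * (N + D) = p * N + p * D := by ring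
      omega] at h
  have C2 : Nat.choose (N + D) N * N ! * D ! = (N + D)! := by
    have h := Nat.choose_mul_factorial_mul_factorial (show N ≤ N + D by omega)
    rwa [show N + D - N = D by omega] at h
  have key : Nat.choose (p * (N + D)) (p * N) * U0 * (p ^ N * N ! * (D ! * (p * D)!))
      = Nat.choose (N + D) N * U1 * (p ^ N * N ! * (D ! * (p * D)!)) := by
    calc Nat.choose (p * (N + D)) (p * N) * U0 * (p ^ N * N ! * (D ! * (p * D)!))
        = Nat.choose (p * (N + D)) (p * N) * (p ^ N * N ! * U0) * (p * D)! * D ! := by ring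
      _ = Nat.choose (p * (N + D)) (p * N) * (p * N)! * (p * D)! * D ! := by rw [← E4]
      _ = (p * (N + D))! * D ! := by rw [C1]
      _ = ((p * D)! * (p ^ N * R * U1)) * D ! := by rw [F1, A1]
      _ = (p * D)! * p ^ N * U1 * (D ! * R) := by ring
      _ = (p * D)! * p ^ N * U1 * (N + D)! := by rw [← F2]
      _ = (p * D)! * p ^ N * U1 * (Nat.choose (N + D) N * N ! * D !) := by rw [C2]
      _ = Nat.choose (N + D) N * U1 * (p ^ N * N ! * (D ! * (p * D)!)) := by ring
  have hpos : 0 < p ^ N * N ! * (D ! * (p * D)!) := by positivity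
  exact Nat.eq_of_mul_eq_mul_right hpos key

private lemma mem_Tset {p n i : ℕ} : i ∈ Tset p n ↔ i < n ∧ ¬ p ∣ (i + 1) := by
  simp [Tset]

private lemma prod_add_sq_zero {R : Type*} [CommRing R] {ι : Type*} [DecidableEq ι]
    (x : R) (hx : x * x = 0) (T : Finset ι) (g : ι → R) :
    ∏ i ∈ T, (x + g i) = (∏ i ∈ T, g i) + x * ∑ i ∈ T, ∏ j ∈ T.erase i, g j := by
  induction T using Finset.induction_on with
  | empty => simp
  | @insert a T ha ih =>
    rw [Finset.prod_insert ha, ih, Finset.prod_insert ha, Finset.sum_insert ha,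
      Finset.erase_insert ha]
    have hsum : ∑ i ∈ T, ∏ j ∈ (insert a T).erase i, g j
        = ∑ i ∈ T, g a * ∏ j ∈ T.erase i, g j := by
      refine Finset.sum_congr rfl fun i hi => ?_
      have hne : i ≠ a := fun h => ha (h ▸ hi)
      rw [Finset.erase_insert_of_ne hne.symm,
        Finset.prod_insert (fun h => ha (Finset.mem_of_mem_erase h))]
    rw [hsum, ← Finset.mul_sum]
    linear_combination (∑ i ∈ T, ∏ j ∈ T.erase i, g j) * hx

private lemma sum_inv_zero (p : ℕ) (hp : p.Prime) (r : ℕ) (hr : 1 ≤ r) (h2 : p ^ r ≠ 2)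
    (b : ℕ) :
    ((∑ i ∈ Tset p (p ^ r * b), ∏ j ∈ (Tset p (p ^ r * b)).erase i, (j + 1) : ℕ)
        : ZMod (p ^ r)) = 0 := by
  set q := p ^ r with hqdef
  set n := q * b with hndef
  have hq0 : 0 < q := pow_pos hp.pos r
  have hq2 : 2 ≤ q := by
    have := hp.two_le
    calc 2 ≤ p := this
    _ = p ^ 1 := (pow_one p).symm
    _ ≤ p ^ r := Nat.pow_le_pow_right hp.pos hr
  have hpq : p ∣ q := dvd_pow_self p (by omega)
  set T := Tset p n with hT
  -- basic facts about members
  have hfacts : ∀ i ∈ T, i < n ∧ ¬ p ∣ (i + 1) ∧ i % q ≤ q - 2 := by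
    intro i hi
    rw [hT, mem_Tset] at hi
    obtain ⟨h1, h3⟩ := hi
    refine ⟨h1, h3, ?_⟩
    by_contra h
    have hlt : i % q < q := Nat.mod_lt _ hq0
    have : i % q = q - 1 := by omega
    have hdm := Nat.div_add_mod i q
    have : q ∣ i + 1 := ⟨i / q + 1, by
      have e : q * (i / q + 1) = q * (i / q) + q := by ring
      omega⟩
    exact h3 (hpq.trans this)
  set g : ℕ → ℕ := fun i => q * (i / q) + (q - 2 - i % q) with hgdef
  have hg : ∀ i, g i = q * (i / q) + (q - 2 - i % q) := fun i => rfl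
  have hg_mem : ∀ a ∈ T, g a ∈ T := by
    intro a haT
    obtain ⟨h1, h3, h4⟩ := hfacts a haT
    have hdm := Nat.div_add_mod a q
    rw [hT, mem_Tset, hg]
    have h1' : a < q * b := hndef ▸ h1
    constructor
    · have hdiv : a / q < b := by
        rw [Nat.div_lt_iff_lt_mul hq0]
        have : b * q = q * b := Nat.mul_comm b q
        omega
      have : q * (a / q + 1) ≤ q * b := Nat.mul_le_mul_left q (by omega)
      have e : q * (a / q + 1) = q * (a / q) + q := by ring
      have : n = q * b := hndef
      omega
    · intro hcon
      have e1 : q * (a / q) + (q - 2 - a % q) + 1 = q * (a / q) + (q - (a % q + 1)) := by omega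
      rw [e1] at hcon
      have hd1 : p ∣ q * (a / q) := Dvd.dvd.mul_right hpq _
      have hd2 : p ∣ q - (a % q + 1) := by
        have := Nat.dvd_sub hcon hd1
        rwa [Nat.add_sub_cancel_left] at this
      have hd3 : p ∣ a % q + 1 := by
        have := Nat.dvd_sub hpq hd2
        rwa [Nat.sub_sub_self (by omega)] at this
      have : p ∣ a + 1 := by
        have : a + 1 = q * (a / q) + (a % q + 1) := by omega
        rw [this]
        exact Nat.dvd_add hd1 hd3
      exact h3 this
  have hg_invol : ∀ a ∈ T, g (g a) = a := by
    intro a haT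
    obtain ⟨h1, h3, h4⟩ := hfacts a haT
    have hdm := Nat.div_add_mod a q
    have hlt : q - 2 - a % q < q := by omega
    have hdiv : g a / q = a / q := by
      rw [hg, Nat.mul_add_div hq0, Nat.div_eq_of_lt hlt]
      omega
    have hmod : g a % q = q - 2 - a % q := by
      rw [hg, Nat.mul_add_mod, Nat.mod_eq_of_lt hlt]
    rw [hg (g a)] at *
    rw [hdiv, hmod]
    omega
  push_cast
  refine Finset.sum_involution (fun a _ => g a) ?_ ?_ (fun a ha => hg_mem a ha)
    (fun a ha => hg_invol a ha)
  · -- f a + f (g a) = 0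
    intro a haT
    obtain ⟨h1, h3, h4⟩ := hfacts a haT
    have hgT := hg_mem a haT
    have hdm := Nat.div_add_mod a q
    -- the nat identity (a+1) + (g a + 1) = q * (2*(a/q) + 1)
    have hnat : (a + 1) + (g a + 1) = q * (2 * (a / q) + 1) := by
      have e : q * (2 * (a / q) + 1) = 2 * (q * (a / q)) + q := by ring
      rw [hg]
      omega
    have hcast : ((g a : ℕ) : ZMod q) + 1 = -(((a : ℕ) : ZMod q) + 1) := by
      have : (((a + 1) + (g a + 1) : ℕ) : ZMod q) = 0 := by
        rw [hnat]
        push_cast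
        rw [ZMod.natCast_self]
        ring
      push_cast at this
      linear_combination this
    set f : ℕ → ZMod q := fun i => ∏ j ∈ T.erase i, ((j : ZMod q) + 1) with hf
    have hP1 : f a * (((a : ℕ) : ZMod q) + 1) = ∏ j ∈ T, ((j : ZMod q) + 1) :=
      Finset.prod_erase_mul T _ haT
    have hP2 : f (g a) * (((g a : ℕ) : ZMod q) + 1) = ∏ j ∈ T, ((j : ZMod q) + 1) :=
      Finset.prod_erase_mul T _ hgT
    have hunit : IsUnit (((a : ℕ) : ZMod q) + 1) := by
      have hcop : Nat.Coprime (a + 1) q :=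
        Nat.Coprime.pow_right r ((hp.coprime_iff_not_dvd.mpr h3).symm)
      have : IsUnit (((a + 1 : ℕ)) : ZMod q) := by
        haveI : NeZero q := ⟨by omega⟩
        exact (ZMod.isUnit_iff_coprime _ _).mpr hcop
      push_cast at this
      exact this
    have hzero : (f a + f (g a)) * (((a : ℕ) : ZMod q) + 1) = 0 := by
      have : f (g a) * (((a : ℕ) : ZMod q) + 1) = -(∏ j ∈ T, ((j : ZMod q) + 1)) := by
        calc f (g a) * (((a : ℕ) : ZMod q) + 1)
            = -(f (g a) * (((g a : ℕ) : ZMod q) + 1)) := by rw [hcast]; ring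
          _ = -(∏ j ∈ T, ((j : ZMod q) + 1)) := by rw [hP2]
      calc (f a + f (g a)) * (((a : ℕ) : ZMod q) + 1)
          = f a * (((a : ℕ) : ZMod q) + 1) + f (g a) * (((a : ℕ) : ZMod q) + 1) := by ring
        _ = ∏ j ∈ T, ((j : ZMod q) + 1) + -(∏ j ∈ T, ((j : ZMod q) + 1)) := by rw [hP1, this]
        _ = 0 := by ring
    exact (hunit.mul_left_eq_zero).mp hzero
  · -- g a ≠ a
    intro a haT _
    obtain ⟨h1, h3, h4⟩ := hfacts a haT
    have hdm := Nat.div_add_mod a q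
    intro hcon
    have heq : q - 2 - a % q = a % q := by
      rw [hg] at hcon
      omega
    have hq_even : q = 2 * (a % q + 1) := by omega
    have hp2 : p = 2 := by
      have h2q : (2 : ℕ) ∣ q := ⟨a % q + 1, hq_even⟩
      have hd : (2 : ℕ) ∣ p := Nat.Prime.dvd_of_dvd_pow Nat.prime_two h2q
      have := hp.two_le
      rcases hp.eq_one_or_self_of_dvd 2 hd with h | h <;> omega
    have hr2 : 2 ≤ r := by
      rcases Nat.lt_or_ge r 2 with h | h
      · exfalso
        apply h2
        rw [hqdef, show r = 1 by omega, hp2, pow_one]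
      · exact h
    have h2d : (2 : ℕ) ∣ a % q + 1 := by
      have : q = 2 ^ r := by rw [hqdef, hp2]
      have h2r : 2 ^ r = 2 * 2 ^ (r - 1) := by
        conv_lhs => rw [show r = 1 + (r - 1) by omega]
        rw [pow_add, pow_one]
      have he : a % q + 1 = 2 ^ (r - 1) := by omega
      rw [he]
      exact dvd_pow_self 2 (by omega)
    have : p ∣ a + 1 := by
      have e : a + 1 = q * (a / q) + (a % q + 1) := by omega
      rw [e, hp2]
      exact Nat.dvd_add (Dvd.dvd.mul_right (by rw [← hp2]; exact hpq) _) h2d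
    exact h3 this

private lemma card_Tset_two (b : ℕ) : (Tset 2 (2 * b)).card = b := by
  induction b with
  | zero => simp [Tset]
  | succ b ih =>
    have hins : Tset 2 (2 * (b + 1)) = insert (2 * b) (Tset 2 (2 * b)) := by
      ext i
      simp only [mem_Tset, Finset.mem_insert]
      omega
    rw [hins, Finset.card_insert_of_notMem (by simp [mem_Tset]), ih]

private lemma choose_even (b c : ℕ) (hb : b % 2 = 1) (hc : c % 2 = 1) :
    2 ∣ Nat.choose (b + c) b := by
  have h := Nat.add_one_mul_choose_eq (b + c - 1) (b - 1)
  rw [show b + c - 1 + 1 = b + c by omega, show b - 1 + 1 = b by omega] at h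
  have h2 : 2 ∣ (b + c) * Nat.choose (b + c - 1) (b - 1) := by
    have : 2 ∣ b + c := by omega
    exact Dvd.dvd.mul_right this _
  rw [h] at h2
  rcases (Nat.Prime.dvd_mul Nat.prime_two).mp h2 with h | h
  · exact h
  · omega

private lemma choose_key (p r b c : ℕ) (hp : p.Prime) (hr : 1 ≤ r) :
    Nat.choose (p ^ r * (b + c)) (p ^ r * b)
      ≡ Nat.choose (p ^ (r - 1) * (b + c)) (p ^ (r - 1) * b) [MOD p ^ (2 * r)] := by
  obtain ⟨s, rfl⟩ : ∃ s, r = s + 1 := ⟨r - 1, by omega⟩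
  simp only [Nat.add_sub_cancel]
  have hp0 : 0 < p := hp.pos
  set q := p ^ (2 * (s + 1)) with hq
  haveI : NeZero q := ⟨by positivity⟩
  set N := p ^ s * b with hN
  set D := p ^ s * c with hD
  rw [show p ^ (s + 1) * (b + c) = p * (N + D) by rw [hN, hD]; ring,
    show p ^ (s + 1) * b = p * N by rw [hN]; ring,
    show p ^ s * (b + c) = N + D by rw [hN, hD]; ring,
    ← ZMod.natCast_eq_natCast_iff]
  set T := Tset p (p * N) with hT
  have id := key_identity p hp0 N D
  -- cast everything to ZMod q
  set X : ZMod q := (Nat.choose (p * (N + D)) (p * N) : ZMod q) with hX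
  set Y : ZMod q := (Nat.choose (N + D) N : ZMod q) with hY
  set U0 : ZMod q := ∏ i ∈ T, ((i : ZMod q) + 1) with hU0
  set x : ZMod q := ((p * D : ℕ) : ZMod q) with hx
  have hxx : x * x = 0 := by
    rw [hx, ← Nat.cast_mul, show (p * D) * (p * D) = q * (c * c) by rw [hD, hq]; ring]
    push_cast
    rw [ZMod.natCast_self]
    ring
  have hexp := prod_add_sq_zero x hxx T (fun i => ((i : ZMod q) + 1))
  set Sn : ℕ := ∑ i ∈ T, ∏ j ∈ T.erase i, (j + 1) with hSn
  have hU1cast : ((∏ i ∈ T, (p * D + i + 1) : ℕ) : ZMod q)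
      = U0 + x * ((Sn : ℕ) : ZMod q) := by
    have e1 : ((∏ i ∈ T, (p * D + i + 1) : ℕ) : ZMod q)
        = ∏ i ∈ T, (x + ((i : ZMod q) + 1)) := by
      rw [hx]
      push_cast
      refine Finset.prod_congr rfl fun i _ => by ring
    have e2 : ((Sn : ℕ) : ZMod q) = ∑ i ∈ T, ∏ j ∈ T.erase i, ((j : ZMod q) + 1) := by
      rw [hSn]; push_cast; rfl
    rw [e1, hexp, e2, hU0]
  have idc : X * U0 = Y * (U0 + x * ((Sn : ℕ) : ZMod q)) := by
    rw [← hU1cast, hX, hY, hU0]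
    have : ((Nat.choose (p * (N + D)) (p * N) * ∏ i ∈ T, (i + 1) : ℕ) : ZMod q)
        = ((Nat.choose (N + D) N * ∏ i ∈ T, (p * D + i + 1) : ℕ) : ZMod q) := by
      rw [id]
    push_cast at this ⊢
    convert this using 2
  -- the correction term vanishes
  have hcorr : Y * (x * ((Sn : ℕ) : ZMod q)) = 0 := by
    have hmain : p ^ (s + 1) ∣ Nat.choose (N + D) N * c * Sn := by
      by_cases hq2 : p ^ (s + 1) = 2
      · -- p = 2, s = 0
        have hp2 : p = 2 := by
          have hd : (2 : ℕ) ∣ p := by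
            have : (2 : ℕ) ∣ p ^ (s + 1) := by rw [hq2]
            exact Nat.Prime.dvd_of_dvd_pow Nat.prime_two this
          have := hp.two_le
          rcases hp.eq_one_or_self_of_dvd 2 hd with h | h <;> omega
        have hs0 : s = 0 := by
          rcases Nat.eq_zero_or_pos s with h | h
          · exact h
          · exfalso
            rw [hp2] at hq2
            have : 2 ^ 2 ≤ 2 ^ (s + 1) := Nat.pow_le_pow_right (by omega) (by omega)
            omega
        subst hs0
        rw [hq2]
        have hNb : N = b := by rw [hN, pow_zero, one_mul]
        have hDc : D = c := by rw [hD, pow_zero, one_mul]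
        rcases Nat.even_or_odd c with hc | hc
        · exact Dvd.dvd.mul_right (Dvd.dvd.mul_left hc.two_dvd _) _
        rcases Nat.even_or_odd b with hb | hb
        · -- b even, so Sn is even
          apply Dvd.dvd.mul_left
          have hcard : T.card = b := by
            rw [hT, hNb, hp2]
            exact card_Tset_two b
          have : (Sn : ZMod 2) = (b : ZMod 2) := by
            rw [hSn]
            push_cast
            have : ∀ i ∈ T, ∏ j ∈ T.erase i, ((j : ZMod 2) + 1) = 1 := by
              intro i _
              refine Finset.prod_eq_one fun j hj => ?_
              have hjT : j ∈ T := Finset.mem_of_mem_erase hj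
              rw [hT, mem_Tset, hp2] at hjT
              have : j % 2 = 0 := by omega
              have : ((j : ℕ) : ZMod 2) = 0 := by
                rw [ZMod.natCast_eq_zero_iff]
                omega
              rw [this]
              ring
            rw [Finset.sum_congr rfl this, Finset.sum_const, hcard]
            simp
          have hbz : (b : ZMod 2) = 0 := by
            rw [ZMod.natCast_eq_zero_iff]
            exact hb.two_dvd
          rw [hbz] at this
          exact (ZMod.natCast_eq_zero_iff _ _).mp this
        · -- b, c odd : the binomial coefficient is even
          apply Dvd.dvd.mul_right
          apply Dvd.dvd.mul_right
          rw [hNb, hDc]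
          exact choose_even b c (Nat.odd_iff.mp hb) (Nat.odd_iff.mp hc)
      · -- general case : p^(s+1) ∣ Sn
        apply Dvd.dvd.mul_left
        have h0 : ((Sn : ℕ) : ZMod (p ^ (s + 1))) = 0 := by
          have := sum_inv_zero p hp (s + 1) (by omega) hq2 b
          rw [hSn, hT, show p * N = p ^ (s + 1) * b by rw [hN]; ring]
          exact this
        exact (ZMod.natCast_eq_zero_iff _ _).mp h0
    have hdvd : q ∣ Nat.choose (N + D) N * (p * D) * Sn := by
      obtain ⟨w, hw⟩ := hmain
      refine ⟨w, ?_⟩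
      have e : Nat.choose (N + D) N * (p * D) * Sn
          = p ^ (s + 1) * (Nat.choose (N + D) N * c * Sn) := by
        rw [hD]; ring
      rw [e, hw, hq]; ring
    calc Y * (x * ((Sn : ℕ) : ZMod q))
        = ((Nat.choose (N + D) N * (p * D) * Sn : ℕ) : ZMod q) := by
          rw [hY, hx]; push_cast; ring
      _ = 0 := (ZMod.natCast_eq_zero_iff _ _).mpr hdvd
  have hfin : X * U0 = Y * U0 := by
    rw [idc]
    rw [mul_add, hcorr, add_zero]
  -- U0 is a unit
  have hunit : IsUnit U0 := by
    have hcop : Nat.Coprime (∏ i ∈ T, (i + 1)) q := by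
      apply Nat.Coprime.prod_left
      intro i hi
      rw [hT, mem_Tset] at hi
      exact Nat.Coprime.pow_right _ ((hp.coprime_iff_not_dvd.mpr hi.2).symm)
    have := (ZMod.isUnit_iff_coprime (∏ i ∈ T, (i + 1)) q).mpr hcop
    have hcast : ((∏ i ∈ T, (i + 1) : ℕ) : ZMod q) = U0 := by
      rw [hU0]; push_cast; rfl
    rwa [hcast] at this
  exact hunit.mul_right_cancel hfin

/-- Let `p` be prime, `r ≥ 1`, and `a₁,...,aₙ` nonnegative integers. Then the multinomial
coefficient `(p^r·a)!/∏ (p^r·aᵢ)!` is congruent to `(p^(r-1)·a)!/∏ (p^(r-1)·aᵢ)!`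
modulo `p^(2r)`, where `a = Σ aᵢ`. -/
theorem multinomial_congr_mod_p_pow {ι : Type*} (s : Finset ι) (f : ι → ℕ)
    (p r : ℕ) (hp : p.Prime) (hr : 1 ≤ r) :
    Nat.multinomial s (fun i => p ^ r * f i) ≡ Nat.multinomial s (fun i => p ^ (r - 1) * f i)
      [MOD p ^ (2 * r)] := by
  classical
  induction s using Finset.induction_on with
  | empty => rfl
  | @insert a s ha ih =>
    rw [Nat.multinomial_insert ha, Nat.multinomial_insert ha]
    have h1 : p ^ r * f a + ∑ i ∈ s, p ^ r * f i = p ^ r * (f a + ∑ i ∈ s, f i) := by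
      rw [Nat.mul_add, Finset.mul_sum]
    have h2 : p ^ (r - 1) * f a + ∑ i ∈ s, p ^ (r - 1) * f i
        = p ^ (r - 1) * (f a + ∑ i ∈ s, f i) := by
      rw [Nat.mul_add, Finset.mul_sum]
    rw [h1, h2]
    exact Nat.ModEq.mul (choose_key p r (f a) (∑ i ∈ s, f i) hp hr) ih
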